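/- arXiv:2004.03578 — 3 statements merged into one kernel-verified Lean document; each statement's English description precedes it below -/
import Mathlib

section
/- Let ℓ^∞(ℤ,ℝ) be the Banach space of bounded real sequences indexed by ℤ with the supremum norm, let S : ℓ^∞ → ℓ^∞ be the shift (SU)_n = U_{n+1}, let Ū ∈ ℓ^∞ be given by Ū_n = 0 for n ≤ 0 and Ū_n = 1 for n > 0, and for μ ∈ [0,1] let V̄(μ) ∈ ℓ^∞ be given by V̄(μ)_n = 0 for n < 0, V̄(μ)_0 = μ, and V̄(μ)_n = 1 for n > 0. Then the set Γ₀ := { (S^p Ū, μ) : p ∈ ℤ, μ ∈ [0,1] } ∪ { (S^p V̄(μ), μ) : p ∈ ℤ, μ ∈ [0,1] } is a connected subset of ℓ^∞(ℤ,ℝ) × ℝ. -/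
open BoundedContinuousFunction

/-- The singular back solution `Ū`: `Ū_n = 0` for `n ≤ 0` and `Ū_n = 1` for `n > 0`. -/
noncomputable def UbarFun : ℤ → ℝ := fun n => if n ≤ 0 then 0 else 1

/-- The singular back solution `V̄(μ)`: `V̄(μ)_n = 0` for `n < 0`, `V̄(μ)_0 = μ`,
`V̄(μ)_n = 1` for `n > 0`. -/
noncomputable def VbarFun (μ : ℝ) : ℤ → ℝ := fun n =>
  if n < 0 then 0 else if n = 0 then μ else 1

lemma abs_VbarFun_le (μ : ℝ) (z : ℤ) : |VbarFun μ z| ≤ 1 + |μ| := by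
  have := abs_nonneg μ
  simp only [VbarFun]
  split_ifs <;> simp [abs_le] <;>
    first
    | positivity
    | (constructor <;> linarith [neg_abs_le μ, le_abs_self μ])
    | linarith [neg_abs_le μ, le_abs_self μ]

noncomputable def shiftedU (q : ℤ) : ℤ →ᵇ ℝ :=
  BoundedContinuousFunction.mkOfBound
    ⟨fun n => UbarFun (n + q), continuous_of_discreteTopology⟩ 1 (by
      intro x y
      simp only [ContinuousMap.coe_mk, UbarFun, Real.dist_eq]
      split_ifs <;> norm_num)

noncomputable def shiftedV (q : ℤ) (μ : ℝ) : ℤ →ᵇ ℝ :=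
  BoundedContinuousFunction.mkOfBound
    ⟨fun n => VbarFun μ (n + q), continuous_of_discreteTopology⟩ (2 * (1 + |μ|)) (by
      intro x y
      simp only [ContinuousMap.coe_mk, Real.dist_eq]
      calc |VbarFun μ (x+q) - VbarFun μ (y+q)| ≤ |VbarFun μ (x+q)| + |VbarFun μ (y+q)| :=
              abs_sub _ _
        _ ≤ (1 + |μ|) + (1 + |μ|) := add_le_add (abs_VbarFun_le _ _) (abs_VbarFun_le _ _)
        _ = 2 * (1 + |μ|) := by ring)

lemma shiftedU_apply (q n : ℤ) : shiftedU q n = UbarFun (n + q) := rfl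

lemma shiftedV_apply (q : ℤ) (μ : ℝ) (n : ℤ) : shiftedV q μ n = VbarFun μ (n + q) := rfl

lemma shiftedV_zero (q : ℤ) : shiftedV q 0 = shiftedU q := by
  ext n
  rw [shiftedV_apply, shiftedU_apply]
  simp only [VbarFun, UbarFun]
  rcases lt_trichotomy (n + q) 0 with h | h | h
  · simp [h, h.le]
  · simp [h]
  · have h1 : ¬ (n + q < 0) := by omega
    have h2 : ¬ (n + q = 0) := by omega
    have h3 : ¬ (n + q ≤ 0) := by omega
    simp [h1, h2, h3]

lemma shiftedV_one (q : ℤ) : shiftedV q 1 = shiftedU (q + 1) := by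
  ext n
  rw [shiftedV_apply, shiftedU_apply]
  simp only [VbarFun, UbarFun]
  rcases lt_trichotomy (n + q) 0 with h | h | h
  · have : n + (q + 1) ≤ 0 := by omega
    simp [h, this]
  · have h1 : ¬ (n + q < 0) := by omega
    have h2 : ¬ (n + (q + 1) ≤ 0) := by omega
    simp [h1, h, h2]
  · have h1 : ¬ (n + q < 0) := by omega
    have h2 : ¬ (n + q = 0) := by omega
    have h3 : ¬ (n + (q + 1) ≤ 0) := by omega
    simp [h1, h2, h3]

lemma lipschitz_shiftedV (q : ℤ) : LipschitzWith 1 (shiftedV q) := by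
  apply LipschitzWith.of_dist_le_mul
  intro μ μ'
  rw [BoundedContinuousFunction.dist_le (by positivity)]
  intro n
  rw [shiftedV_apply, shiftedV_apply]
  simp only [VbarFun, Real.dist_eq, NNReal.coe_one, one_mul]
  split_ifs <;> simp [abs_nonneg]

/-- In `ℓ^∞(ℤ,ℝ) × ℝ` (bounded sequences with sup norm, times ℝ),
the set `Γ₀` of all pairs `(S^q Ū, μ)` and `(S^q V̄(μ), μ)` with `q ∈ ℤ` and
`μ ∈ [0,1]` is connected.  Here the shift acts by `(S^q W)_n = W_{n+q}`. -/
theorem statement8 :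
    IsConnected { p : (ℤ →ᵇ ℝ) × ℝ |
      p.2 ∈ Set.Icc (0 : ℝ) 1 ∧
      ∃ q : ℤ, (∀ n : ℤ, p.1 n = UbarFun (n + q)) ∨
               (∀ n : ℤ, p.1 n = VbarFun p.2 (n + q)) } := by
  set A : ℤ → Set ((ℤ →ᵇ ℝ) × ℝ) := fun q => (fun μ : ℝ => (shiftedU q, μ)) '' Set.Icc 0 1
    with hAdef
  set B : ℤ → Set ((ℤ →ᵇ ℝ) × ℝ) := fun q => (fun μ : ℝ => (shiftedV q μ, μ)) '' Set.Icc 0 1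
    with hBdef
  have hA : ∀ q, IsConnected (A q) := fun q =>
    (isConnected_Icc zero_le_one).image _ (Continuous.continuousOn (by fun_prop))
  have hB : ∀ q, IsConnected (B q) := fun q =>
    (isConnected_Icc zero_le_one).image _ (Continuous.continuousOn
      (((lipschitz_shiftedV q).continuous).prodMk continuous_id))
  have hC : ∀ q, IsConnected (A q ∪ B q) := by
    intro q
    refine (hA q).union ?_ (hB q)
    exact ⟨(shiftedU q, 0), ⟨0, by simp, rfl⟩, ⟨0, by simp, by simp [shiftedV_zero]⟩⟩
  have hunion : { p : (ℤ →ᵇ ℝ) × ℝ |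
      p.2 ∈ Set.Icc (0 : ℝ) 1 ∧
      ∃ q : ℤ, (∀ n : ℤ, p.1 n = UbarFun (n + q)) ∨
               (∀ n : ℤ, p.1 n = VbarFun p.2 (n + q)) } = ⋃ q : ℤ, (A q ∪ B q) := by
    ext ⟨f, μ⟩
    simp only [Set.mem_setOf_eq, Set.mem_iUnion, Set.mem_union, hAdef, hBdef, Set.mem_image]
    constructor
    · rintro ⟨hμ, q, h | h⟩
      · refine ⟨q, Or.inl ⟨μ, hμ, Prod.ext ?_ rfl⟩⟩
        ext n; rw [shiftedU_apply]; exact (h n).symm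
      · refine ⟨q, Or.inr ⟨μ, hμ, Prod.ext ?_ rfl⟩⟩
        ext n; rw [shiftedV_apply]; exact (h n).symm
    · rintro ⟨q, ⟨ν, hν, he⟩ | ⟨ν, hν, he⟩⟩ <;>
        obtain ⟨h1, h2⟩ := Prod.mk.injEq .. ▸ he <;> subst h2
      · exact ⟨hν, q, Or.inl fun n => by rw [← h1, shiftedU_apply]⟩
      · exact ⟨hν, q, Or.inr fun n => by rw [← h1, shiftedV_apply]⟩
  rw [hunion]
  apply IsConnected.iUnion_of_chain hC
  intro q
  have hs : Order.succ q = q + 1 := rfl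
  refine ⟨(shiftedU (q+1), 1), Or.inr ⟨1, by simp, by simp [shiftedV_one]⟩, ?_⟩
  rw [hs]
  exact Or.inl ⟨1, by simp, rfl⟩
end

section
/- For every compact interval [a,b] ⊂ (0,1) there exist d⋆ > 0 and C > 0 such that for every d ∈ (0, d⋆) and every μ ∈ [a,b] there exists a bounded sequence U : ℤ → ℝ satisfying the discrete Nagumo steady-state equation 0 = d(U_{n+1} + U_{n−1} − 2U_n) + U_n(U_n − μ)(1 − U_n) for all n ∈ ℤ, such that sup_{n∈ℤ} |U_n − Ū_n| ≤ C·d, U_n → 0 as n → −∞, and U_n → 1 as n → +∞; moreover U can be chosen as U = Φ(d, μ) for a continuous map Φ : (0,d⋆) × [a,b] → ℓ^∞(ℤ,ℝ) with sup_{μ∈[a,b]} ‖Φ(d,μ) − Ū‖_∞ → 0 as d → 0⁺. -/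
open scoped NNReal ENNReal


open BoundedContinuousFunction Filter

noncomputable def Ubar : ℤ →ᵇ ℝ :=
  BoundedContinuousFunction.ofNormedAddCommGroup UbarFun continuous_of_discreteTopology 1
    (by intro n; simp only [UbarFun]; split_ifs <;> norm_num)
@[simp] lemma Ubar_apply (n : ℤ) : Ubar n = UbarFun n := rfl
lemma Ubar_abs_le (n : ℤ) : |Ubar n| ≤ 1 := by
  simp only [Ubar_apply, UbarFun]; split_ifs <;> norm_num

noncomputable def Pb : ℤ →ᵇ ℝ :=
  BoundedContinuousFunction.ofNormedAddCommGroup (fun n => if n ≤ 0 then 1 else 0)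
    continuous_of_discreteTopology 1 (by intro n; split_ifs <;> norm_num)

noncomputable def Qb : ℤ →ᵇ ℝ :=
  BoundedContinuousFunction.ofNormedAddCommGroup (fun n => if n ≤ 0 then 0 else 1)
    continuous_of_discreteTopology 1 (by intro n; split_ifs <;> norm_num)

@[simp] lemma Pb_apply (n : ℤ) : Pb n = if n ≤ 0 then 1 else 0 := rfl
@[simp] lemma Qb_apply (n : ℤ) : Qb n = if n ≤ 0 then 0 else 1 := rfl

noncomputable def Sh (k : ℤ) (f : ℤ →ᵇ ℝ) : ℤ →ᵇ ℝ :=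
  f.compContinuous ⟨fun n => n + k, continuous_of_discreteTopology⟩

@[simp] lemma Sh_apply (k : ℤ) (f : ℤ →ᵇ ℝ) (n : ℤ) : Sh k f n = f (n + k) := rfl

noncomputable def Tmap (μ d : ℝ) (V : ℤ →ᵇ ℝ) : ℤ →ᵇ ℝ :=
  (μ⁻¹ • Pb + (1-μ)⁻¹ • Qb) *
    (d • (Sh 1 (Ubar + V) + Sh (-1) (Ubar + V) - (2:ℝ) • (Ubar + V))
      + V * V * ((1+μ) • Pb + (μ-2) • Qb) - V * V * V)

lemma Tmap_apply (μ d : ℝ) (V : ℤ →ᵇ ℝ) (n : ℤ) :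
    Tmap μ d V n = (if n ≤ 0 then μ⁻¹ else (1-μ)⁻¹) *
      (d * ((Ubar + V) (n+1) + (Ubar + V) (n-1) - 2 * (Ubar + V) n)
        + V n * V n * (if n ≤ 0 then 1+μ else μ-2) - V n * V n * V n) := by
  simp only [Tmap, BoundedContinuousFunction.coe_mul, BoundedContinuousFunction.coe_add,
    BoundedContinuousFunction.coe_sub, BoundedContinuousFunction.coe_smul, Pi.mul_apply,
    Pi.add_apply, Pi.sub_apply, Pi.smul_apply, Sh_apply, Pb_apply, Qb_apply, smul_eq_mul]
  split_ifs <;> ring_nf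

section
variable {m μ d : ℝ} {V W : ℤ →ᵇ ℝ}

lemma inv_e_le (hm0 : 0 < m) (hμ1 : m ≤ μ) (hμ2 : μ ≤ 1 - m) (n : ℤ) :
    |if n ≤ 0 then μ⁻¹ else (1-μ)⁻¹| ≤ m⁻¹ := by
  have h1 : (0:ℝ) < μ := lt_of_lt_of_le hm0 hμ1
  have h2 : (0:ℝ) < 1 - μ := by linarith
  split_ifs
  · rw [abs_of_pos (by positivity)]
    exact inv_anti₀ hm0 hμ1
  · rw [abs_of_pos (by positivity)]
    exact inv_anti₀ hm0 (by linarith)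

lemma kappa_le (hm0 : 0 < m) (hμ1 : m ≤ μ) (hμ2 : μ ≤ 1 - m) (n : ℤ) :
    |if n ≤ 0 then 1+μ else μ-2| ≤ 2 := by
  split_ifs <;> rw [abs_le] <;> constructor <;> linarith

lemma inner_bound (hm0 : 0 < m) (hm1 : m ≤ 1) (hμ1 : m ≤ μ) (hμ2 : μ ≤ 1 - m)
    (hV : ∀ k : ℤ, |V k| ≤ m/28) (hd : 0 ≤ d) (n : ℤ) :
    |d * ((Ubar + V) (n+1) + (Ubar + V) (n-1) - 2 * (Ubar + V) n)
        + V n * V n * (if n ≤ 0 then 1+μ else μ-2) - V n * V n * V n|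
      ≤ 8 * d + 3 * (m/28)^2 := by
  have hU : ∀ k : ℤ, |(Ubar + V) k| ≤ 2 := by
    intro k
    have := Ubar_abs_le k
    have := hV k
    have h28 : m/28 ≤ 1 := by linarith
    calc |(Ubar + V) k| = |Ubar k + V k| := rfl
      _ ≤ |Ubar k| + |V k| := abs_add_le _ _
      _ ≤ 2 := by linarith
  have h1 := hU (n+1); have h2 := hU (n-1); have h3 := hU n
  have hL : |(Ubar + V) (n+1) + (Ubar + V) (n-1) - 2 * (Ubar + V) n| ≤ 8 := by
    have h4 : |(Ubar + V) (n+1) + (Ubar + V) (n-1)| ≤ 4 := (abs_add_le _ _).trans (by linarith)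
    have h5 := abs_sub ((Ubar + V) (n+1) + (Ubar + V) (n-1)) (2 * (Ubar + V) n)
    rw [abs_mul, abs_two] at h5
    linarith
  have hκ := kappa_le hm0 hμ1 hμ2 n
  have hv := hV n
  have hv0 : (0:ℝ) ≤ |V n| := abs_nonneg _
  have hm28 : (0:ℝ) ≤ m/28 := by positivity
  set L := (Ubar + V) (n+1) + (Ubar + V) (n-1) - 2 * (Ubar + V) n with hLdef
  set v := V n with hvdef
  set κ := (if n ≤ 0 then 1+μ else μ-2 : ℝ) with hκdef
  have e1 : |d * L + v*v*κ - v*v*v| ≤ |d*L + v*v*κ| + |v*v*v| := abs_sub _ _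
  have e2 : |d*L + v*v*κ| ≤ |d*L| + |v*v*κ| := abs_add_le _ _
  have e3 : |d*L| ≤ d*8 := by
    rw [abs_mul, abs_of_nonneg hd]; exact mul_le_mul_of_nonneg_left hL hd
  have e4 : |v*v*κ| ≤ (m/28)*(m/28)*2 := by
    rw [abs_mul, abs_mul]
    exact mul_le_mul (mul_le_mul hv hv hv0 hm28) hκ (abs_nonneg _) (by positivity)
  have e5 : |v*v*v| ≤ (m/28)*(m/28)*(m/28) := by
    rw [abs_mul, abs_mul]
    exact mul_le_mul (mul_le_mul hv hv hv0 hm28) hv (abs_nonneg _) (by positivity)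
  have h28 : m/28 ≤ 1 := by linarith
  nlinarith

lemma Tmap_pt_le (hm0 : 0 < m) (hm1 : m ≤ 1) (hμ1 : m ≤ μ) (hμ2 : μ ≤ 1 - m)
    (hV : ∀ k : ℤ, |V k| ≤ m/28) (hd : 0 ≤ d) (hd' : d ≤ m^2/784) (n : ℤ) :
    |Tmap μ d V n| ≤ m/28 := by
  rw [Tmap_apply, abs_mul]
  have h1 := inv_e_le hm0 hμ1 hμ2 (μ := μ) n
  have h2 := inner_bound hm0 hm1 hμ1 hμ2 hV hd n
  calc |if n ≤ 0 then μ⁻¹ else (1-μ)⁻¹| * _ ≤ m⁻¹ * (8 * d + 3 * (m/28)^2) :=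
        mul_le_mul h1 h2 (abs_nonneg _) (by positivity)
    _ ≤ m/28 := by
        rw [inv_mul_le_iff₀ hm0]
        nlinarith

set_option maxHeartbeats 1000000 in
lemma Tmap_contr_pt (hm0 : 0 < m) (hm1 : m ≤ 1) (hμ1 : m ≤ μ) (hμ2 : μ ≤ 1 - m)
    (hV : ∀ k : ℤ, |V k| ≤ m/28) (hW : ∀ k : ℤ, |W k| ≤ m/28)
    (hd : 0 ≤ d) (hd' : d ≤ m^2/784) {δ : ℝ} (hδ0 : 0 ≤ δ)
    (hδ : ∀ k : ℤ, |V k - W k| ≤ δ) (n : ℤ) :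
    |Tmap μ d V n - Tmap μ d W n| ≤ (1/2) * δ := by
  rw [Tmap_apply, Tmap_apply, ← mul_sub, abs_mul]
  have h1 := inv_e_le hm0 hμ1 hμ2 (μ := μ) n
  have hκ := kappa_le hm0 hμ1 hμ2 (μ := μ) n
  simp only [BoundedContinuousFunction.add_apply] at *
  set κ := (if n ≤ 0 then 1+μ else μ-2 : ℝ)
  set a1 := V (n+1); set a2 := V (n-1); set a0 := V n
  set b1 := W (n+1); set b2 := W (n-1); set b0 := W n
  have key : (d * (Ubar (n+1) + a1 + (Ubar (n-1) + a2) - 2*(Ubar n + a0)) + a0*a0*κ - a0*a0*a0)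
           - (d * (Ubar (n+1) + b1 + (Ubar (n-1) + b2) - 2*(Ubar n + b0)) + b0*b0*κ - b0*b0*b0)
           = d*((a1-b1) + (a2-b2) - 2*(a0-b0)) + κ*((a0+b0)*(a0-b0))
             - (a0-b0)*(a0*a0+a0*b0+b0*b0) := by ring
  rw [key]
  have d1 := hδ (n+1); have d2 := hδ (n-1); have d0 := hδ n
  have v0 := hV n; have w0 := hW n
  have eL : |(a1-b1) + (a2-b2) - 2*(a0-b0)| ≤ 4*δ := by
    rw [abs_le] at *
    constructor <;> [linarith [d1.1, d2.1, d0.1, d0.2]; linarith [d1.2, d2.2, d0.1, d0.2]]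
  have e1 : |d*((a1-b1) + (a2-b2) - 2*(a0-b0))| ≤ d*(4*δ) := by
    rw [abs_mul, abs_of_nonneg hd]; exact mul_le_mul_of_nonneg_left eL hd
  have e2 : |κ*((a0+b0)*(a0-b0))| ≤ 2*((2*(m/28))*δ) := by
    rw [abs_mul, abs_mul]
    refine mul_le_mul hκ (mul_le_mul ?_ d0 (abs_nonneg _) (by positivity)) (by positivity) (by norm_num)
    calc |a0 + b0| ≤ |a0| + |b0| := abs_add_le _ _
      _ ≤ 2*(m/28) := by linarith
  have e3 : |(a0-b0)*(a0*a0+a0*b0+b0*b0)| ≤ δ*(3*(m/28)^2) := by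
    rw [abs_mul]
    refine mul_le_mul d0 ?_ (abs_nonneg _) hδ0
    have t1 : |a0*a0+a0*b0+b0*b0| ≤ |a0*a0+a0*b0| + |b0*b0| := abs_add_le _ _
    have t2 : |a0*a0+a0*b0| ≤ |a0*a0| + |a0*b0| := abs_add_le _ _
    have t3 : |b0*b0| = abs b0 * abs b0 := abs_mul _ _
    have t4 : |a0*a0| = abs a0 * abs a0 := abs_mul _ _
    have t5 : |a0*b0| = abs a0 * abs b0 := abs_mul _ _
    have h0 : (0:ℝ) ≤ |a0| := abs_nonneg _
    have h0' : (0:ℝ) ≤ |b0| := abs_nonneg _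
    nlinarith
  have etot : |d*((a1-b1) + (a2-b2) - 2*(a0-b0)) + κ*((a0+b0)*(a0-b0))
      - (a0-b0)*(a0*a0+a0*b0+b0*b0)|
      ≤ d*(4*δ) + 2*((2*(m/28))*δ) + δ*(3*(m/28)^2) := by
    calc _ ≤ |d*((a1-b1) + (a2-b2) - 2*(a0-b0)) + κ*((a0+b0)*(a0-b0))|
            + |(a0-b0)*(a0*a0+a0*b0+b0*b0)| := abs_sub _ _
      _ ≤ _ := by
        have := abs_add_le (d*((a1-b1) + (a2-b2) - 2*(a0-b0))) (κ*((a0+b0)*(a0-b0)))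
        linarith
  calc _ ≤ m⁻¹ * (d*(4*δ) + 2*((2*(m/28))*δ) + δ*(3*(m/28)^2)) :=
        mul_le_mul h1 etot (abs_nonneg _) (by positivity)
    _ ≤ (1/2) * δ := by
        rw [inv_mul_le_iff₀ hm0]
        have ha : d*δ ≤ (m^2/784)*δ := mul_le_mul_of_nonneg_right hd' hδ0
        have hbb : m^2*δ ≤ m*δ := by nlinarith [mul_nonneg (mul_nonneg (sub_nonneg.mpr hm1) hδ0) hm0.le]
        nlinarith

lemma Tmap_zero_pt (hm0 : 0 < m) (hμ1 : m ≤ μ) (hμ2 : μ ≤ 1 - m) (hd : 0 ≤ d) (n : ℤ) :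
    |Tmap μ d 0 n| ≤ m⁻¹ * d := by
  rw [Tmap_apply]
  simp only [BoundedContinuousFunction.coe_zero, Pi.zero_apply, mul_zero, zero_mul, add_zero,
    sub_zero, BoundedContinuousFunction.add_apply, add_zero]
  rw [abs_mul, abs_mul, abs_of_nonneg hd]
  have h1 := inv_e_le hm0 hμ1 hμ2 (μ := μ) n
  have h2 : |Ubar (n+1) + Ubar (n-1) - 2 * Ubar n| ≤ 1 := by
    simp only [Ubar_apply, UbarFun]
    split_ifs <;> first
        | omega
        | norm_num
  calc _ ≤ m⁻¹ * (d * 1) := by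
        refine mul_le_mul h1 (mul_le_mul_of_nonneg_left h2 hd) (by positivity) (by positivity)
    _ = m⁻¹ * d := by ring
end

section
variable {m μ d : ℝ} {V W : ℤ →ᵇ ℝ}

def NSet (m : ℝ) : Set (ℤ →ᵇ ℝ) :=
  {V | (∀ n : ℤ, |V n| ≤ m/28) ∧ Tendsto (fun n : ℤ => V n) atBot (nhds 0) ∧
    Tendsto (fun n : ℤ => V n) atTop (nhds 0)}

lemma zero_mem_NSet (hm : 0 ≤ m) : (0 : ℤ →ᵇ ℝ) ∈ NSet m := by
  refine ⟨fun n => by simp; positivity, ?_, ?_⟩ <;> simp [tendsto_const_nhds]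

lemma isClosed_tendstoZero (l : Filter ℤ) :
    IsClosed {f : ℤ →ᵇ ℝ | Tendsto (fun n : ℤ => f n) l (nhds 0)} := by
  refine isClosed_of_closure_subset ?_
  intro f hf
  simp only [Set.mem_setOf_eq]
  rw [Metric.tendsto_nhds]
  intro ε hε
  rcases Metric.mem_closure_iff.1 hf (ε/2) (by linarith) with ⟨g, hg, hfg⟩
  have hg' := Metric.tendsto_nhds.1 hg (ε/2) (by linarith)
  filter_upwards [hg'] with n hn
  have h1 : dist (f n) (g n) ≤ dist f g := BoundedContinuousFunction.dist_coe_le_dist n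
  calc dist (f n) 0 ≤ dist (f n) (g n) + dist (g n) 0 := dist_triangle _ _ _
    _ < ε := by linarith
  
lemma isClosed_NSet (m : ℝ) : IsClosed (NSet m) := by
  have h1 : IsClosed {V : ℤ →ᵇ ℝ | ∀ n : ℤ, |V n| ≤ m/28} := by
    have : {V : ℤ →ᵇ ℝ | ∀ n : ℤ, |V n| ≤ m/28} = ⋂ n : ℤ, {V : ℤ →ᵇ ℝ | |V n| ≤ m/28} := by
      ext V; simp
    rw [this]
    refine isClosed_iInter fun n => isClosed_le ?_ continuous_const
    exact (continuous_eval_const n).abs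
  exact (h1.inter ((isClosed_tendstoZero atBot).inter (isClosed_tendstoZero atTop)))
end

section
variable {m μ d : ℝ} {V W : ℤ →ᵇ ℝ}

def Hyp (m μ d : ℝ) : Prop := 0 < m ∧ m ≤ 1 ∧ m ≤ μ ∧ μ ≤ 1 - m ∧ 0 ≤ d ∧ d ≤ m^2/784

lemma tendsto_shift_bot (h : Tendsto (fun n : ℤ => V n) atBot (nhds 0)) (k : ℤ) :
    Tendsto (fun n : ℤ => V (n + k)) atBot (nhds 0) :=
  h.comp (tendsto_atBot_add_const_right atBot k tendsto_id)

lemma tendsto_shift_top (h : Tendsto (fun n : ℤ => V n) atTop (nhds 0)) (k : ℤ) :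
    Tendsto (fun n : ℤ => V (n + k)) atTop (nhds 0) :=
  h.comp (tendsto_atTop_add_const_right atTop k tendsto_id)

lemma Tmap_mem_NSet (hm0 : 0 < m) (hm1 : m ≤ 1) (hμ1 : m ≤ μ) (hμ2 : μ ≤ 1 - m)
    (hd : 0 ≤ d) (hd' : d ≤ m^2/784) (hV : V ∈ NSet m) : Tmap μ d V ∈ NSet m := by
  obtain ⟨hVb, hVbot, hVtop⟩ := hV
  refine ⟨Tmap_pt_le hm0 hm1 hμ1 hμ2 hVb hd hd', ?_, ?_⟩
  · -- atBot
    have h1 := tendsto_shift_bot hVbot 1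
    have h2 := tendsto_shift_bot hVbot (-1)
    have main : Tendsto (fun n : ℤ => μ⁻¹ *
        (d * (V (n+1) + V (n+(-1)) - 2 * V n) + V n * V n * (1+μ) - V n * V n * V n))
        atBot (nhds (μ⁻¹ * (d * (0 + 0 - 2*0) + 0*0*(1+μ) - 0*0*0))) := by
      exact ((((h1.add h2).sub (hVbot.const_mul 2)).const_mul d).add
        ((hVbot.mul hVbot).mul_const (1+μ)) |>.sub ((hVbot.mul hVbot).mul hVbot)).const_mul μ⁻¹
    rw [show μ⁻¹ * (d * ((0:ℝ) + 0 - 2*0) + 0*0*(1+μ) - 0*0*0) = 0 by ring] at main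
    refine main.congr' ?_
    filter_upwards [eventually_le_atBot (-1 : ℤ)] with n hn
    rw [Tmap_apply]
    have e0 : n ≤ 0 := by omega
    have e1 : n + 1 ≤ 0 := by omega
    have e2 : n + -1 ≤ 0 := by omega
    simp only [BoundedContinuousFunction.add_apply, Ubar_apply, UbarFun, sub_eq_add_neg n 1,
      if_pos e0, if_pos e1, if_pos e2, zero_add]
  · -- atTop
    have h1 := tendsto_shift_top hVtop 1
    have h2 := tendsto_shift_top hVtop (-1)
    have main : Tendsto (fun n : ℤ => (1-μ)⁻¹ *
        (d * (V (n+1) + V (n+(-1)) - 2 * V n) + V n * V n * (μ-2) - V n * V n * V n))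
        atTop (nhds ((1-μ)⁻¹ * (d * (0 + 0 - 2*0) + 0*0*(μ-2) - 0*0*0))) := by
      exact ((((h1.add h2).sub (hVtop.const_mul 2)).const_mul d).add
        ((hVtop.mul hVtop).mul_const (μ-2)) |>.sub ((hVtop.mul hVtop).mul hVtop)).const_mul (1-μ)⁻¹
    rw [show (1-μ)⁻¹ * (d * ((0:ℝ) + 0 - 2*0) + 0*0*(μ-2) - 0*0*0) = 0 by ring] at main
    refine main.congr' ?_
    filter_upwards [eventually_ge_atTop (2 : ℤ)] with n hn
    rw [Tmap_apply]
    have e0 : ¬ n ≤ 0 := by omega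
    have e1 : ¬ n + 1 ≤ 0 := by omega
    have e2 : ¬ n + -1 ≤ 0 := by omega
    simp only [BoundedContinuousFunction.add_apply, Ubar_apply, UbarFun, sub_eq_add_neg n 1,
      if_neg e0, if_neg e1, if_neg e2]
    ring_nf

noncomputable def Fmap (m μ d : ℝ) (h : Hyp m μ d) : NSet m → NSet m := fun V =>
  ⟨Tmap μ d V.1, Tmap_mem_NSet h.1 h.2.1 h.2.2.1 h.2.2.2.1 h.2.2.2.2.1 h.2.2.2.2.2 V.2⟩

lemma Fmap_contracting (h : Hyp m μ d) : ContractingWith (1/2 : ℝ≥0) (Fmap m μ d h) := by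
  obtain ⟨hm0, hm1, hμ1, hμ2, hd, hd'⟩ := h
  constructor
  · exact_mod_cast (by norm_num : (1:ℝ)/2 < 1)
  · refine LipschitzWith.of_dist_le_mul fun V W => ?_
    rw [Subtype.dist_eq]
    have hδ0 : (0:ℝ) ≤ dist (V : ℤ →ᵇ ℝ) (W : ℤ →ᵇ ℝ) := dist_nonneg
    refine BoundedContinuousFunction.dist_le_iff_of_nonempty.2 fun n => ?_
    have := Tmap_contr_pt hm0 hm1 hμ1 hμ2 V.2.1 W.2.1 hd hd' hδ0
      (fun k => by
        have h1 : dist ((V:ℤ→ᵇℝ) k) ((W:ℤ→ᵇℝ) k) ≤ dist (V:ℤ→ᵇℝ) (W:ℤ→ᵇℝ) :=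
          BoundedContinuousFunction.dist_coe_le_dist k
        rwa [Real.dist_eq] at h1) n
    calc dist (Tmap μ d V n) (Tmap μ d W n) = |Tmap μ d (V:ℤ→ᵇℝ) n - Tmap μ d (W:ℤ→ᵇℝ) n| :=
          Real.dist_eq _ _
      _ ≤ (1/2) * dist (V:ℤ→ᵇℝ) (W:ℤ→ᵇℝ) := this
      _ = ((1/2 : ℝ≥0) : ℝ) * dist (V:ℤ→ᵇℝ) (W:ℤ→ᵇℝ) := by norm_num
      _ ≤ _ := le_refl _

noncomputable def Vfix (m μ d : ℝ) (h : Hyp m μ d) : NSet m :=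
  haveI : Nonempty (NSet m) := ⟨⟨0, zero_mem_NSet h.1.le⟩⟩
  haveI : CompleteSpace (NSet m) := (isClosed_NSet m).completeSpace_coe
  ContractingWith.fixedPoint (Fmap m μ d h) (Fmap_contracting h)

lemma Vfix_isFixedPt (h : Hyp m μ d) :
    Tmap μ d (Vfix m μ d h : ℤ →ᵇ ℝ) = (Vfix m μ d h : ℤ →ᵇ ℝ) := by
  haveI : Nonempty (NSet m) := ⟨⟨0, zero_mem_NSet h.1.le⟩⟩
  haveI : CompleteSpace (NSet m) := (isClosed_NSet m).completeSpace_coe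
  have := (Fmap_contracting h).fixedPoint_isFixedPt
  exact congrArg Subtype.val this

lemma Vfix_dist_le (h : Hyp m μ d) (x : NSet m) :
    dist (x : ℤ →ᵇ ℝ) (Vfix m μ d h : ℤ →ᵇ ℝ) ≤ 2 * dist (x : ℤ →ᵇ ℝ) (Tmap μ d x) := by
  haveI : Nonempty (NSet m) := ⟨⟨0, zero_mem_NSet h.1.le⟩⟩
  haveI : CompleteSpace (NSet m) := (isClosed_NSet m).completeSpace_coe
  have := (Fmap_contracting h).dist_fixedPoint_le x
  rw [Subtype.dist_eq, Subtype.dist_eq] at this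
  have h2 : (1 : ℝ) - ((1/2 : ℝ≥0) : ℝ) = 1/2 := by norm_num
  rw [h2] at this
  calc dist (x : ℤ →ᵇ ℝ) (Vfix m μ d h : ℤ →ᵇ ℝ) ≤ dist (x:ℤ→ᵇℝ) (Tmap μ d x) / (1/2) := this
    _ = 2 * dist (x:ℤ→ᵇℝ) (Tmap μ d x) := by ring
end
/-- For every compact interval `[a,b] ⊂ (0,1)` there are
`d⋆ > 0`, `C > 0` and a continuous map `Φ : (0,d⋆) × [a,b] → ℓ^∞(ℤ,ℝ)` such that
for all `d ∈ (0,d⋆)` and `μ ∈ [a,b]`, `U = Φ(d,μ)` is a bounded solution of the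
discrete Nagumo steady-state equation with `sup_n |U_n − Ū_n| ≤ C·d`,
`U_n → 0` as `n → −∞`, `U_n → 1` as `n → +∞`, and moreover
`sup_{μ∈[a,b]} ‖Φ(d,μ) − Ū‖_∞ → 0` as `d → 0⁺`. -/
theorem statement9 (a b : ℝ) (ha : 0 < a) (hab : a ≤ b) (hb : b < 1) :
    ∃ dstar > (0 : ℝ), ∃ C > (0 : ℝ), ∃ Φ : ℝ → ℝ → (ℤ →ᵇ ℝ),
      ContinuousOn (fun q : ℝ × ℝ => Φ q.1 q.2) (Set.Ioo 0 dstar ×ˢ Set.Icc a b) ∧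
      (∀ d ∈ Set.Ioo (0 : ℝ) dstar, ∀ μ ∈ Set.Icc a b,
        (∀ n : ℤ, 0 = d * (Φ d μ (n + 1) + Φ d μ (n - 1) - 2 * Φ d μ n)
            + Φ d μ n * (Φ d μ n - μ) * (1 - Φ d μ n)) ∧
        (∀ n : ℤ, |Φ d μ n - UbarFun n| ≤ C * d) ∧
        Tendsto (fun n : ℤ => Φ d μ n) atBot (nhds 0) ∧
        Tendsto (fun n : ℤ => Φ d μ n) atTop (nhds 1)) ∧
      (∀ ε > (0 : ℝ), ∃ d₀ > (0 : ℝ), ∀ d : ℝ, 0 < d → d < d₀ → d < dstar →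
        ∀ μ ∈ Set.Icc a b, ∀ n : ℤ, |Φ d μ n - UbarFun n| ≤ ε) := by
  have ha1 : a < 1 := lt_of_le_of_lt hab hb
  set m := min a (1 - b) with hmdef
  have hm0 : 0 < m := lt_min ha (by linarith)
  have hma : m ≤ a := min_le_left _ _
  have hmb : m ≤ 1 - b := min_le_right _ _
  have hm1 : m ≤ 1 := le_trans hma ha1.le
  set ds := m^2/784 with hdsdef
  have hds0 : 0 < ds := by positivity
  set μc : ℝ → ℝ := fun μ => max a (min μ b) with hμcdef
  set dc : ℝ → ℝ := fun d => max 0 (min d ds) with hdcdef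
  have hyp : ∀ p : ℝ × ℝ, Hyp m (μc p.2) (dc p.1) := by
    intro p
    refine ⟨hm0, hm1, ?_, ?_, le_max_left _ _, ?_⟩
    · exact le_trans hma (le_max_left a _)
    · have h1 : μc p.2 ≤ b := max_le hab (min_le_right _ _)
      linarith
    · exact max_le hds0.le (min_le_right _ _)
  set Vf : ℝ × ℝ → NSet m := fun p => Vfix m (μc p.2) (dc p.1) (hyp p) with hVfdef
  have master : ∀ d : ℝ, 0 < d → d < ds → ∀ μ ∈ Set.Icc a b, ∀ n : ℤ,
      |(Ubar + (Vf (d, μ) : ℤ →ᵇ ℝ)) n - UbarFun n| ≤ 2 * m⁻¹ * d := by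
    intro d hd0 hd1 μ hμI n
    have hμeq : μc μ = μ := by
      simp only [hμcdef]
      rw [min_eq_left hμI.2, max_eq_right hμI.1]
    have hdeq : dc d = d := by
      simp only [hdcdef]
      rw [min_eq_left hd1.le, max_eq_right hd0.le]
    set V : ℤ →ᵇ ℝ := (Vf (d, μ) : ℤ →ᵇ ℝ) with hVdef
    have hdist : dist (0 : ℤ →ᵇ ℝ) V ≤ 2 * (m⁻¹ * d) := by
      have h1 : dist (0 : ℤ →ᵇ ℝ) V ≤ 2 * dist ((0:ℤ→ᵇℝ)) (Tmap (μc μ) (dc d) 0) :=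
        Vfix_dist_le (hyp (d, μ)) ⟨0, zero_mem_NSet hm0.le⟩
      rw [hμeq, hdeq] at h1
      have h2 : dist (0 : ℤ →ᵇ ℝ) (Tmap μ d 0) ≤ m⁻¹ * d := by
        rw [dist_comm, dist_zero_right]
        refine BoundedContinuousFunction.norm_le (by positivity) |>.2 fun n => ?_
        have h2a := Tmap_zero_pt (μ := μ) (d := d) hm0 (le_trans hma hμI.1)
          (show μ ≤ 1 - m by linarith [hμI.2]) hd0.le n
        simpa [Real.norm_eq_abs] using h2a
      calc dist (0 : ℤ →ᵇ ℝ) V ≤ 2 * dist ((0:ℤ→ᵇℝ)) (Tmap μ d 0) := h1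
        _ ≤ 2 * (m⁻¹ * d) := by linarith
    have hptbd : |V n| ≤ 2 * m⁻¹ * d := by
      have h1 : dist (V n) ((0 : ℤ →ᵇ ℝ) n) ≤ dist V (0 : ℤ →ᵇ ℝ) :=
        BoundedContinuousFunction.dist_coe_le_dist n
      rw [dist_comm V] at h1
      simp only [BoundedContinuousFunction.coe_zero, Pi.zero_apply, Real.dist_eq, sub_zero] at h1
      calc |V n| ≤ dist (0 : ℤ →ᵇ ℝ) V := h1
        _ ≤ 2 * (m⁻¹ * d) := hdist
        _ = 2 * m⁻¹ * d := by ring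
    have : (Ubar + V) n - UbarFun n = V n := by simp [UbarFun]
    rw [this]
    exact hptbd
  refine ⟨ds, hds0, 2 * m⁻¹, by positivity, fun d μ => Ubar + (Vf (d, μ) : ℤ →ᵇ ℝ), ?_, ?_, ?_⟩
  · -- continuity
    have hVfc : Continuous fun p : ℝ × ℝ => (Vf p : ℤ →ᵇ ℝ) := by
      rw [continuous_iff_continuousAt]
      intro p₀
      set W₀ : ℤ →ᵇ ℝ := (Vf p₀ : ℤ →ᵇ ℝ) with hW₀def
      have hμcc : Continuous fun p : ℝ × ℝ => μc p.2 :=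
        Continuous.max continuous_const (Continuous.min continuous_snd continuous_const)
      have hdcc : Continuous fun p : ℝ × ℝ => dc p.1 :=
        Continuous.max continuous_const (Continuous.min continuous_fst continuous_const)
      have hμne : ∀ p : ℝ × ℝ, μc p.2 ≠ 0 :=
        fun p => ne_of_gt (lt_of_lt_of_le ha (le_max_left a _))
      have hμne' : ∀ p : ℝ × ℝ, 1 - μc p.2 ≠ 0 := by
        intro p
        have h1 : μc p.2 ≤ b := max_le hab (min_le_right _ _)
        have : μc p.2 < 1 := lt_of_le_of_lt h1 hb
        linarith
      have hg : Continuous fun p : ℝ × ℝ => Tmap (μc p.2) (dc p.1) W₀ := by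
        simp only [Tmap]
        refine Continuous.mul ?_ ?_
        · exact ((hμcc.inv₀ hμne).smul continuous_const).add
            (((continuous_const.sub hμcc).inv₀ hμne').smul continuous_const)
        · exact ((hdcc.smul continuous_const).add (continuous_const.mul
            (((continuous_const.add hμcc).smul continuous_const).add
              ((hμcc.sub continuous_const).smul continuous_const)))).sub continuous_const
      have hfix0 : Tmap (μc p₀.2) (dc p₀.1) W₀ = W₀ := Vfix_isFixedPt (hyp p₀)
      have hbd : ∀ p : ℝ × ℝ, dist ((Vf p : ℤ →ᵇ ℝ)) W₀
          ≤ 2 * dist (Tmap (μc p.2) (dc p.1) W₀) W₀ := by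
        intro p
        have h1 := Vfix_dist_le (hyp p) (Vf p₀)
        rw [dist_comm ((Vf p₀ : ℤ →ᵇ ℝ)) ((Vf p : ℤ →ᵇ ℝ)),
          dist_comm ((Vf p₀ : ℤ →ᵇ ℝ)) (Tmap (μc p.2) (dc p.1) (Vf p₀ : ℤ →ᵇ ℝ))] at h1
        exact h1
      rw [ContinuousAt, tendsto_iff_dist_tendsto_zero]
      have hlim : Tendsto (fun p : ℝ × ℝ => 2 * dist (Tmap (μc p.2) (dc p.1) W₀) W₀)
          (nhds p₀) (nhds (2 * dist (Tmap (μc p₀.2) (dc p₀.1) W₀) W₀)) :=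
        (Tendsto.dist (hg.tendsto p₀) tendsto_const_nhds).const_mul 2
      rw [hfix0, dist_self, mul_zero] at hlim
      exact squeeze_zero (fun p => dist_nonneg) hbd hlim
    exact (continuous_const.add hVfc).continuousOn
  · -- main properties
    rintro d ⟨hd0, hd1⟩ μ hμI
    have hμeq : μc μ = μ := by
      simp only [hμcdef]
      rw [min_eq_left hμI.2, max_eq_right hμI.1]
    have hdeq : dc d = d := by
      simp only [hdcdef]
      rw [min_eq_left hd1.le, max_eq_right hd0.le]
    set V : ℤ →ᵇ ℝ := (Vf (d, μ) : ℤ →ᵇ ℝ) with hVdef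
    have hfix : Tmap μ d V = V := by
      have h0 : Tmap (μc μ) (dc d) V = V := Vfix_isFixedPt (hyp (d, μ))
      rwa [hμeq, hdeq] at h0
    have hμ0 : μ ≠ 0 := ne_of_gt (lt_of_lt_of_le ha hμI.1)
    have hμ1' : (1 : ℝ) - μ ≠ 0 := by
      have := lt_of_le_of_lt hμI.2 hb; intro hc; linarith
    refine ⟨?_, ?_, ?_, ?_⟩
    · -- equation
      intro n
      have hveq : V n = Tmap μ d V n := by rw [hfix]
      rw [Tmap_apply] at hveq
      by_cases hn0 : n ≤ 0
      · rw [if_pos hn0, if_pos hn0] at hveq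
        have hU0 : (Ubar + V) n = V n := by
          simp [UbarFun, if_pos hn0]
        rw [hU0] at hveq ⊢
        simp only [BoundedContinuousFunction.add_apply, Ubar_apply] at hveq ⊢
        field_simp at hveq
        linear_combination hveq
      · rw [if_neg hn0, if_neg hn0] at hveq
        have hU0 : (Ubar + V) n = 1 + V n := by
          simp [UbarFun, if_neg hn0]
        rw [hU0] at hveq ⊢
        simp only [BoundedContinuousFunction.add_apply, Ubar_apply] at hveq ⊢
        field_simp at hveq
        linear_combination hveq
    · -- C*d bound
      exact fun n => master d hd0 hd1 μ hμI n
    · -- atBot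
      have hdecay := (Vf (d, μ)).2.2.1
      refine hdecay.congr' ?_
      filter_upwards [eventually_le_atBot (0 : ℤ)] with n hn
      simp [UbarFun, if_pos hn]
    · -- atTop
      have hdecay := (Vf (d, μ)).2.2.2
      have hlim : Tendsto (fun n : ℤ => 1 + V n) atTop (nhds (1 + 0)) :=
        tendsto_const_nhds.add hdecay
      rw [add_zero] at hlim
      refine hlim.congr' ?_
      filter_upwards [eventually_ge_atTop (1 : ℤ)] with n hn
      have : ¬ n ≤ 0 := by omega
      simp [UbarFun, if_neg this, hVdef]
  · -- smallness
    intro ε hε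
    refine ⟨m * ε / 2, by positivity, fun d hd0 hd1 hd2 μ hμI n => ?_⟩
    refine (master d hd0 hd2 μ hμI n).trans ?_
    have he : 2 * m⁻¹ * (m * ε / 2) = ε := by field_simp
    have hmono : 2 * m⁻¹ * d ≤ 2 * m⁻¹ * (m * ε / 2) := by
      have : (0:ℝ) ≤ 2 * m⁻¹ := by positivity
      exact mul_le_mul_of_nonneg_left hd1.le this
    linarith
end

section
/- For every compact interval [a,b] ⊂ (0,1) there exist d⋆ > 0 and C > 0 such that for every d ∈ (0, d⋆), every μ ∈ [a,b], and every pattern σ : ℤ → {0,1}, there exists a bounded sequence U : ℤ → ℝ satisfying the discrete Nagumo steady-state equation 0 = d(U_{n+1} + U_{n−1} − 2U_n) + U_n(U_n − μ)(1 − U_n) for all n ∈ ℤ with sup_{n∈ℤ} |U_n − σ_n| ≤ C·d. Moreover, if σ_n = 0 for all but finitely many n, then the resulting solution satisfies U_n → 0 as |n| → ∞ (so in particular, patterns σ with exactly k ≥ 2 maximal finite blocks of consecutive 1's, separated by blocks of 0's, yield k-pulse localized steady states for all sufficiently small d > 0). -/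
set_option maxHeartbeats 1000000

open scoped BoundedContinuousFunction

/-- Remainder of the Nagumo nonlinearity at a root `s ∈ {0,1}`. -/
noncomputable def nagRem (s μ v : ℝ) : ℝ :=
  (s + v) * ((s + v) - μ) * (1 - (s + v)) + (μ + (1 - 2*μ) * s) * v

lemma nagRem_zero (s μ : ℝ) (hs : s = 0 ∨ s = 1) : nagRem s μ 0 = 0 := by
  rcases hs with h | h <;> subst h <;> simp [nagRem]

lemma nagRem_lip (s μ v w r : ℝ) (hs : s = 0 ∨ s = 1) (hμ0 : 0 ≤ μ) (hμ1 : μ ≤ 1)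
    (hr : r ≤ 1) (hv : |v| ≤ r) (hw : |w| ≤ r) :
    |nagRem s μ v - nagRem s μ w| ≤ 7 * r * |v - w| := by
  have hr0 : 0 ≤ r := le_trans (abs_nonneg v) hv
  rw [abs_le] at hv hw
  rcases hs with h | h <;> subst h
  · have key : nagRem 0 μ v - nagRem 0 μ w
        = (v - w) * ((v + w) * (1 + μ) - (v^2 + v*w + w^2)) := by
      simp only [nagRem]; ring
    rw [key, abs_mul, mul_comm (7*r)]
    have : |(v + w) * (1 + μ) - (v^2 + v*w + w^2)| ≤ 7 * r := by
      rw [abs_le]; constructor <;> nlinarith [sq_nonneg (v+w), sq_nonneg (v-w), sq_nonneg r]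
    exact mul_le_mul_of_nonneg_left this (abs_nonneg _)
  · have key : nagRem 1 μ v - nagRem 1 μ w
        = (v - w) * (-(v + w) * (2 - μ) - (v^2 + v*w + w^2)) := by
      simp only [nagRem]; ring
    rw [key, abs_mul, mul_comm (7*r)]
    have : |(-(v + w)) * (2 - μ) - (v^2 + v*w + w^2)| ≤ 7 * r := by
      rw [abs_le]; constructor <;> nlinarith [sq_nonneg (v+w), sq_nonneg (v-w), sq_nonneg r]
    exact mul_le_mul_of_nonneg_left this (abs_nonneg _)

lemma nagRem_bound (s μ v r : ℝ) (hs : s = 0 ∨ s = 1) (hμ0 : 0 ≤ μ) (hμ1 : μ ≤ 1)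
    (hr : r ≤ 1) (hv : |v| ≤ r) : |nagRem s μ v| ≤ 7 * r * r := by
  have h0 : |(0:ℝ)| ≤ r := by simpa using le_trans (abs_nonneg v) hv
  have h := nagRem_lip s μ v 0 r hs hμ0 hμ1 hr hv h0
  rw [nagRem_zero s μ hs] at h
  simp only [sub_zero] at h
  calc |nagRem s μ v| ≤ 7 * r * |v| := h
    _ ≤ 7 * r * r := by nlinarith [le_trans (abs_nonneg v) hv, abs_nonneg v]

lemma abs_div_le_of_le {x β m' B : ℝ} (hm : 0 < m') (hβ : m' ≤ β) (hx : |x| ≤ B) :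
    |x / β| ≤ B / m' := by
  rw [abs_div, abs_of_pos (lt_of_lt_of_le hm hβ)]
  calc |x| / β ≤ |x| / m' := by gcongr
    _ ≤ B / m' := by gcongr

/-- For every compact interval `[a,b] ⊂ (0,1)` there exist
`d⋆ > 0` and `C > 0` such that for every `d ∈ (0,d⋆)`, `μ ∈ [a,b]`, and every
`{0,1}`-valued pattern `σ : ℤ → ℝ`, there is a bounded solution `U` of the
discrete Nagumo steady-state equation with `sup_n |U_n − σ_n| ≤ C·d`; moreover,
if `σ_n = 0` for all but finitely many `n`, then `U_n → 0` as `|n| → ∞`. -/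
theorem statement14 (a b : ℝ) (ha : 0 < a) (hab : a ≤ b) (hb : b < 1) :
    ∃ dstar > (0 : ℝ), ∃ C > (0 : ℝ),
      ∀ d ∈ Set.Ioo (0 : ℝ) dstar, ∀ μ ∈ Set.Icc a b,
        ∀ σ : ℤ → ℝ, (∀ n : ℤ, σ n = 0 ∨ σ n = 1) →
          ∃ U : ℤ → ℝ, (∃ B : ℝ, ∀ n : ℤ, |U n| ≤ B) ∧
            (∀ n : ℤ, 0 = d * (U (n + 1) + U (n - 1) - 2 * U n)
                + U n * (U n - μ) * (1 - U n)) ∧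
            (∀ n : ℤ, |U n - σ n| ≤ C * d) ∧
            ({n : ℤ | σ n ≠ 0}.Finite →
              Filter.Tendsto U Filter.cofinite (nhds 0)) := by
  have hb1 : 0 < 1 - b := by linarith
  set m : ℝ := min a (1 - b) with hm_def
  have hm : 0 < m := lt_min ha hb1
  have hma : m ≤ a := min_le_left _ _
  have hmb : m ≤ 1 - b := min_le_right _ _
  set C : ℝ := 16 / m with hC_def
  have hC : 0 < C := by positivity
  have hCm : C * m = 16 := by rw [hC_def]; field_simp
  clear_value m C
  refine ⟨min (min (12/(4*C+7*C^2)) (m/(2*(4+7*C)))) (min (a/16) (min (a/(4*C)) (1/(4*C)))),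
    by positivity, C, hC, ?_⟩
  rintro d ⟨hd0, hdu⟩ μ ⟨hμa, hμb⟩ σ hσ
  have hμ0 : 0 < μ := lt_of_lt_of_le ha hμa
  have hμ1 : μ < 1 := lt_of_le_of_lt hμb hb
  -- the constraints encoded in `dstar`
  have hd1 : d * (4*C+7*C^2) ≤ 12 := by
    have h := hdu.trans_le ((min_le_left _ _).trans (min_le_left _ _))
    rw [lt_div_iff₀ (by positivity)] at h; linarith
  have hd2 : (4+7*C)*d ≤ m/2 := by
    have h := hdu.trans_le ((min_le_left _ _).trans (min_le_right _ _))
    rw [lt_div_iff₀ (by positivity)] at h; nlinarith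
  have hd3 : d ≤ a/16 :=
    le_of_lt (hdu.trans_le ((min_le_right _ _).trans (min_le_left _ _)))
  have hd4 : C*d ≤ a/4 := by
    have h := hdu.trans_le ((min_le_right _ _).trans ((min_le_right _ _).trans (min_le_left _ _)))
    rw [lt_div_iff₀ (by positivity)] at h; nlinarith
  have hd5 : C*d ≤ 1/4 := by
    have h := hdu.trans_le ((min_le_right _ _).trans ((min_le_right _ _).trans (min_le_right _ _)))
    rw [lt_div_iff₀ (by positivity)] at h; nlinarith
  set r : ℝ := C * d with hr_def
  have hr0 : 0 < r := by positivity
  clear_value r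
  have hr1 : r ≤ 1 := by rw [hr_def]; linarith
  have hrm : r * m = 16 * d := by rw [hr_def]; linear_combination d * hCm
  -- bounds on the pattern and on the linearization coefficient
  have hσ1 : ∀ k : ℤ, |σ k| ≤ 1 := by
    intro k; rcases hσ k with h | h <;> rw [h] <;> norm_num
  have hβm : ∀ n : ℤ, m ≤ μ + (1 - 2*μ) * σ n := by
    intro n; rcases hσ n with h | h <;> rw [h] <;> nlinarith
  have hβ1 : ∀ n : ℤ, μ + (1 - 2*μ) * σ n ≤ 1 := by
    intro n; rcases hσ n with h | h <;> rw [h] <;> nlinarith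
  have hβpos : ∀ n : ℤ, 0 < μ + (1 - 2*μ) * σ n := fun n => lt_of_lt_of_le hm (hβm n)
  -- the fixed-point map (on perturbations V of the pattern)
  set G : (ℤ →ᵇ ℝ) → ℤ → ℝ := fun V n =>
    (d * ((σ (n+1) + V (n+1)) + (σ (n-1) + V (n-1)) - 2*(σ n + V n))
      + nagRem (σ n) μ (V n)) / (μ + (1 - 2*μ) * σ n) with hGdef
  -- self-map bound
  have hGb : ∀ V : ℤ →ᵇ ℝ, ‖V‖ ≤ r → ∀ n : ℤ, |G V n| ≤ r := by
    intro V hV n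
    have hVk : ∀ k : ℤ, |V k| ≤ r := by
      intro k
      exact le_trans (by simpa [Real.norm_eq_abs] using V.norm_coe_le_norm k) hV
    have hnum : |d * ((σ (n+1) + V (n+1)) + (σ (n-1) + V (n-1)) - 2*(σ n + V n))
        + nagRem (σ n) μ (V n)| ≤ (4 + 4*r)*d + 7*r*r := by
      have hRem := nagRem_bound (σ n) μ (V n) r (hσ n) hμ0.le hμ1.le hr1 (hVk n)
      have hlin : |(σ (n+1) + V (n+1)) + (σ (n-1) + V (n-1)) - 2*(σ n + V n)| ≤ 4 + 4*r := by
        have h1 := abs_le.mp (hσ1 (n+1)); have h2 := abs_le.mp (hσ1 (n-1))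
        have h3 := abs_le.mp (hσ1 n)
        have h4 := abs_le.mp (hVk (n+1)); have h5 := abs_le.mp (hVk (n-1))
        have h6 := abs_le.mp (hVk n)
        rw [abs_le]; constructor <;> linarith [h1.1, h1.2, h2.1, h2.2, h3.1, h3.2,
          h4.1, h4.2, h5.1, h5.2, h6.1, h6.2]
      calc |d * ((σ (n+1) + V (n+1)) + (σ (n-1) + V (n-1)) - 2*(σ n + V n))
            + nagRem (σ n) μ (V n)|
          ≤ |d * ((σ (n+1) + V (n+1)) + (σ (n-1) + V (n-1)) - 2*(σ n + V n))|
            + |nagRem (σ n) μ (V n)| := abs_add_le _ _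
        _ ≤ d * (4 + 4*r) + 7*r*r := by
            rw [abs_mul, abs_of_pos hd0]
            exact add_le_add (mul_le_mul_of_nonneg_left hlin hd0.le) hRem
        _ = (4 + 4*r)*d + 7*r*r := by ring
    have hdiv : |G V n| ≤ ((4 + 4*r)*d + 7*r*r) / m := by
      rw [hGdef]
      exact abs_div_le_of_le hm (hβm n) hnum
    refine le_trans hdiv ?_
    rw [div_le_iff₀ hm, hrm, hr_def]
    nlinarith [mul_le_mul_of_nonneg_left hd1 hd0.le]
  -- Lipschitz bound
  have hGlip : ∀ V W : ℤ →ᵇ ℝ, ‖V‖ ≤ r → ‖W‖ ≤ r → ∀ n : ℤ,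
      |G V n - G W n| ≤ ((4+7*C)*d/m) * dist V W := by
    intro V W hV hW n
    have hVk : ∀ k : ℤ, |V k| ≤ r := fun k =>
      le_trans (by simpa [Real.norm_eq_abs] using V.norm_coe_le_norm k) hV
    have hWk : ∀ k : ℤ, |W k| ≤ r := fun k =>
      le_trans (by simpa [Real.norm_eq_abs] using W.norm_coe_le_norm k) hW
    have hdistk : ∀ k : ℤ, |V k - W k| ≤ dist V W := by
      intro k
      have := BoundedContinuousFunction.dist_coe_le_dist (f := V) (g := W) k
      rwa [Real.dist_eq] at this
    have hdist0 : 0 ≤ dist V W := dist_nonneg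
    rw [hGdef]; simp only
    rw [div_sub_div_same]
    have hnum : |(d * ((σ (n+1) + V (n+1)) + (σ (n-1) + V (n-1)) - 2*(σ n + V n))
          + nagRem (σ n) μ (V n))
        - (d * ((σ (n+1) + W (n+1)) + (σ (n-1) + W (n-1)) - 2*(σ n + W n))
          + nagRem (σ n) μ (W n))| ≤ (4*d + 7*r) * dist V W := by
      have key : (d * ((σ (n+1) + V (n+1)) + (σ (n-1) + V (n-1)) - 2*(σ n + V n))
            + nagRem (σ n) μ (V n))
          - (d * ((σ (n+1) + W (n+1)) + (σ (n-1) + W (n-1)) - 2*(σ n + W n))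
            + nagRem (σ n) μ (W n))
          = d * ((V (n+1) - W (n+1)) + (V (n-1) - W (n-1)) - 2*(V n - W n))
            + (nagRem (σ n) μ (V n) - nagRem (σ n) μ (W n)) := by ring
      rw [key]
      have hRem := nagRem_lip (σ n) μ (V n) (W n) r (hσ n) hμ0.le hμ1.le hr1 (hVk n) (hWk n)
      have hlin : |(V (n+1) - W (n+1)) + (V (n-1) - W (n-1)) - 2*(V n - W n)|
          ≤ 4 * dist V W := by
        have h1 := abs_le.mp (hdistk (n+1)); have h2 := abs_le.mp (hdistk (n-1))
        have h3 := abs_le.mp (hdistk n)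
        rw [abs_le]; constructor <;> linarith [h1.1, h1.2, h2.1, h2.2, h3.1, h3.2]
      calc |d * ((V (n+1) - W (n+1)) + (V (n-1) - W (n-1)) - 2*(V n - W n))
            + (nagRem (σ n) μ (V n) - nagRem (σ n) μ (W n))|
          ≤ |d * ((V (n+1) - W (n+1)) + (V (n-1) - W (n-1)) - 2*(V n - W n))|
            + |nagRem (σ n) μ (V n) - nagRem (σ n) μ (W n)| := abs_add_le _ _
        _ ≤ d * (4 * dist V W) + 7 * r * |V n - W n| := by
            rw [abs_mul, abs_of_pos hd0]
            exact add_le_add (mul_le_mul_of_nonneg_left hlin hd0.le) hRem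
        _ ≤ d * (4 * dist V W) + 7 * r * dist V W := by
            gcongr
            exact hdistk n
        _ = (4*d + 7*r) * dist V W := by ring
    refine le_trans (abs_div_le_of_le hm (hβm n) hnum) (le_of_eq ?_)
    rw [hr_def]; ring
    -- the complete metric space: closed ball of radius r in ℓ∞
  set Sb : Set (ℤ →ᵇ ℝ) := Metric.closedBall 0 r with hSb
  haveI : CompleteSpace Sb := Metric.isClosed_closedBall.completeSpace_coe
  haveI : Nonempty Sb := ⟨⟨0, Metric.mem_closedBall_self hr0.le⟩⟩
  have hmemr : ∀ V : Sb, ‖(V : ℤ →ᵇ ℝ)‖ ≤ r := fun V => mem_closedBall_zero_iff.mp V.2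
  -- the self-map
  set F : Sb → Sb := fun V =>
    ⟨BoundedContinuousFunction.ofNormedAddCommGroup (G (V : ℤ →ᵇ ℝ))
        continuous_of_discreteTopology r
        (fun n => by rw [Real.norm_eq_abs]; exact hGb (V : ℤ →ᵇ ℝ) (hmemr V) n),
      mem_closedBall_zero_iff.mpr
        (BoundedContinuousFunction.norm_ofNormedAddCommGroup_le _ hr0.le _)⟩ with hF
  have hFapp : ∀ (V : Sb) (n : ℤ), ((F V : Sb) : ℤ →ᵇ ℝ) n = G (V : ℤ →ᵇ ℝ) n := by
    intro V n; rfl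
  -- contraction
  set κ : NNReal := ⟨(4+7*C)*d/m, by positivity⟩ with hκ
  have hκ1 : (κ : ℝ) < 1 := by
    have hc : (κ : ℝ) = (4+7*C)*d/m := rfl
    rw [hc, div_lt_one hm]
    linarith
  have hcontr : ContractingWith κ F := by
    constructor
    · exact_mod_cast hκ1
    · refine LipschitzWith.of_dist_le_mul fun V W => ?_
      rw [Subtype.dist_eq, Subtype.dist_eq V W]
      have hd8 : (0:ℝ) ≤ ↑κ * dist (V : ℤ →ᵇ ℝ) (W : ℤ →ᵇ ℝ) :=
        mul_nonneg κ.2 dist_nonneg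
      refine (BoundedContinuousFunction.dist_le hd8).mpr fun n => ?_
      rw [Real.dist_eq, hFapp V n, hFapp W n]
      have := hGlip (V : ℤ →ᵇ ℝ) (W : ℤ →ᵇ ℝ) (hmemr V) (hmemr W) n
      calc |G (V : ℤ →ᵇ ℝ) n - G (W : ℤ →ᵇ ℝ) n|
          ≤ ((4+7*C)*d/m) * dist (V : ℤ →ᵇ ℝ) (W : ℤ →ᵇ ℝ) := this
        _ = ↑κ * dist (V : ℤ →ᵇ ℝ) (W : ℤ →ᵇ ℝ) := rfl
  -- the fixed point
  set Vf : Sb := hcontr.fixedPoint F with hVf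
  have hfix : F Vf = Vf := hcontr.fixedPoint_isFixedPt
  have hVfr : ‖(Vf : ℤ →ᵇ ℝ)‖ ≤ r := hmemr Vf
  have hVfk : ∀ k : ℤ, |(Vf : ℤ →ᵇ ℝ) k| ≤ r := fun k =>
    le_trans (by simpa [Real.norm_eq_abs] using (Vf : ℤ →ᵇ ℝ).norm_coe_le_norm k) hVfr
  have hVfeq : ∀ n : ℤ, (Vf : ℤ →ᵇ ℝ) n = G (Vf : ℤ →ᵇ ℝ) n := by
    intro n
    conv_lhs => rw [← hfix]
    exact hFapp Vf n
  -- the solution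
  set U : ℤ → ℝ := fun n => σ n + (Vf : ℤ →ᵇ ℝ) n with hU
  have hUeq : ∀ n : ℤ, 0 = d * (U (n + 1) + U (n - 1) - 2 * U n)
      + U n * (U n - μ) * (1 - U n) := by
    intro n
    have h := hVfeq n
    rw [hGdef] at h
    simp only at h
    rw [eq_div_iff (ne_of_gt (hβpos n))] at h
    simp only [nagRem] at h
    simp only [hU]
    linear_combination h
  have hUclose : ∀ n : ℤ, |U n - σ n| ≤ r := by
    intro n
    simp only [hU, add_sub_cancel_left]
    exact hVfk n
  refine ⟨U, ⟨1 + r, ?_⟩, hUeq, hUclose, ?_⟩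
  · intro n
    calc |U n| = |σ n + (Vf : ℤ →ᵇ ℝ) n| := by rw [hU]
      _ ≤ |σ n| + |(Vf : ℤ →ᵇ ℝ) n| := abs_add_le _ _
      _ ≤ 1 + r := add_le_add (hσ1 n) (hVfk n)
  -- decay of finitely supported patterns
  · intro hfin
    obtain ⟨N, hN⟩ : ∃ N : ℤ, ∀ n : ℤ, σ n ≠ 0 → |n| ≤ N := by
      obtain ⟨N, hN⟩ := (hfin.image (fun n => |n|)).bddAbove
      exact ⟨N, fun n hn => hN ⟨n, hn, rfl⟩⟩
    have key : ∀ k : ℕ, ∀ n : ℤ, N + k < |n| → |U n| ≤ r / 2^k := by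
      intro k
      induction k with
      | zero =>
        intro n hn
        have hσ0 : σ n = 0 := by
          by_contra h
          exact absurd (hN n h) (by push_cast at hn ⊢; linarith)
        have := hUclose n
        rw [hσ0, sub_zero] at this
        simpa using this
      | succ k ih =>
        intro n hn
        push_cast at hn
        have hstep : ∀ j : ℤ, |n - j| ≤ 1 → N + (k:ℤ) < |j| := by
          intro j hj
          have h1 : |n| - |j| ≤ |n - j| := abs_sub_abs_le_abs_sub n j
          linarith
        have e0 : |U n| ≤ r / 2^k := ih n (hstep n (by simp))
        have e1 : |U (n+1)| ≤ r / 2^k := ih (n+1) (hstep (n+1) (by simp))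
        have e2 : |U (n-1)| ≤ r / 2^k := ih (n-1) (hstep (n-1) (by simp [sub_sub_cancel]))
        set t : ℝ := r / 2^k with ht
        have ht0 : 0 < t := by positivity
        have h2k : (1:ℝ) ≤ 2 ^ k := one_le_pow₀ (by norm_num : (1:ℝ) ≤ 2)
        have htr : t ≤ r := by rw [ht]; exact div_le_self hr0.le h2k
        have heq := hUeq n
        have hB : U n * (U n - μ) * (1 - U n) = -(d * (U (n+1) + U (n-1) - 2 * U n)) := by
          linarith [heq]
        have hA : |U (n+1) + U (n-1) - 2*U n| ≤ 4*t := by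
          have a1 := abs_le.mp e1; have a2 := abs_le.mp e2; have a0 := abs_le.mp e0
          rw [abs_le]; constructor <;> linarith
        have habs : |U n| * |U n - μ| * |1 - U n| ≤ 4*d*t := by
          calc |U n| * |U n - μ| * |1 - U n| = |U n * (U n - μ) * (1 - U n)| := by
                rw [abs_mul, abs_mul]
            _ = d * |U (n+1) + U (n-1) - 2*U n| := by
                rw [hB, abs_neg, abs_mul, abs_of_pos hd0]
            _ ≤ d * (4*t) := mul_le_mul_of_nonneg_left hA hd0.le
            _ = 4*d*t := by ring
        have hra : r ≤ a/4 := hd4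
        have hr14 : r ≤ 1/4 := hd5
        have htμ : t ≤ μ/4 := by linarith
        have ht4 : t ≤ 1/4 := by linarith
        have hμt : μ - t ≤ |U n - μ| := by
          have h1 : |μ| - |U n| ≤ |μ - U n| := abs_sub_abs_le_abs_sub μ (U n)
          rw [abs_of_pos hμ0, abs_sub_comm] at h1
          have h0 := abs_le.mp e0
          linarith [h0.1, h0.2]
        have h1t : 1 - t ≤ |1 - U n| := by
          have h1 : |(1:ℝ)| - |U n| ≤ |1 - U n| := abs_sub_abs_le_abs_sub 1 (U n)
          have h0 := abs_le.mp e0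
          rw [abs_one] at h1
          linarith [h0.1, h0.2]
        have hmono : |U n| * ((μ - t) * (1 - t)) ≤ 4*d*t := by
          calc |U n| * ((μ - t) * (1 - t)) ≤ |U n| * (|U n - μ| * |1 - U n|) := by
                refine mul_le_mul_of_nonneg_left ?_ (abs_nonneg _)
                exact mul_le_mul hμt h1t (by linarith) (abs_nonneg _)
            _ = |U n| * |U n - μ| * |1 - U n| := by ring
            _ ≤ 4*d*t := habs
        have hfac : μ/2 ≤ (μ - t) * (1 - t) := by
          nlinarith [sq_nonneg t, mul_le_mul_of_nonneg_left ht4 hμ0.le]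
        have hdμ : d ≤ μ/16 := by linarith
        have hgoal : |U n| ≤ t/2 := by
          nlinarith [hmono, abs_nonneg (U n),
            mul_le_mul_of_nonneg_left hfac (abs_nonneg (U n)),
            mul_le_mul_of_nonneg_right hdμ ht0.le]
        calc |U n| ≤ t/2 := hgoal
          _ = r / 2^(k+1) := by rw [ht, pow_succ]; ring
    rw [Metric.tendsto_nhds]
    intro ε hε
    obtain ⟨k, hk⟩ := exists_pow_lt_of_lt_one (div_pos hε hr0) (by norm_num : (1:ℝ)/2 < 1)
    have hrk : r / 2^k < ε := by
      have h1 : r / 2^k = (1/2:ℝ)^k * r := by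
        rw [one_div, inv_pow]; ring
      rw [h1]
      exact (lt_div_iff₀ hr0).mp hk
    rw [Filter.eventually_cofinite]
    apply Set.Finite.subset (Set.finite_Icc (-(N + (k:ℤ))) (N + (k:ℤ)))
    intro n hn
    simp only [Set.mem_setOf_eq] at hn
    by_contra hmem
    apply hn
    have hbig : N + (k:ℤ) < |n| := by
      by_contra h
      push_neg at h
      exact hmem (Set.mem_Icc.mpr (abs_le.mp h))
    calc dist (U n) 0 = |U n| := by rw [Real.dist_eq, sub_zero]
      _ ≤ r/2^k := key k n hbig
      _ < ε := hrk
end
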